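/- For every x_2 ∈ 𝒳_2 with P(X_2 = x_2, R_2 = 1) > 0, one has P(R_1 = 1 | X_2 = x_2, R_2 = 1) = f_1(1; x_2), and whenever P(X_2 = x_2) > 0 also P(R_1 = 1 | X_2 = x_2) = f_1(1; x_2). Hence the propensity score of R_1 is identified from the distribution of (X_2, R_1) on the event R_2 = 1 (on which X_2 is observed): conditioning on R_2 = 1 does not change it. -/
import Mathlib


open Finset

/-- Two-variable crossworld missing data model (associational irrelevancy):
the propensity score of `R₁` given `X₂` is unchanged by further conditioning
on `R₂ = 1`, and both conditionals equal the mechanism factor `f₁(1; x₂)`. -/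
theorem stmt_2
    (X1 X2 : Type) [Fintype X1] [Fintype X2] [Nonempty X1] [Nonempty X2]
    (q : X1 → X2 → ℝ) (hq0 : ∀ x1 x2, 0 ≤ q x1 x2)
    (hq1 : (∑ x1, ∑ x2, q x1 x2) = 1)
    (f1 : Bool → X2 → ℝ) (f2 : Bool → X1 → ℝ)
    (hf10 : ∀ b x, 0 ≤ f1 b x) (hf1sum : ∀ x, f1 false x + f1 true x = 1)
    (hf20 : ∀ b x, 0 ≤ f2 b x) (hf2sum : ∀ x, f2 false x + f2 true x = 1)
    (p : X1 → X2 → Bool → Bool → ℝ)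
    (hp : ∀ x1 x2 r1 r2, p x1 x2 r1 r2 = q x1 x2 * f1 r1 x2 * f2 r2 x1)
    (x2 : X2) :
    -- P(R₁ = 1 | X₂ = x₂, R₂ = 1) = f₁(1; x₂)
    ((0 < ∑ x1, ∑ r1, p x1 x2 r1 true) →
      (∑ x1, p x1 x2 true true) / (∑ x1, ∑ r1, p x1 x2 r1 true) = f1 true x2)
    ∧
    -- P(R₁ = 1 | X₂ = x₂) = f₁(1; x₂)
    ((0 < ∑ x1, ∑ r1, ∑ r2, p x1 x2 r1 r2) →
      (∑ x1, ∑ r2, p x1 x2 true r2) / (∑ x1, ∑ r1, ∑ r2, p x1 x2 r1 r2) = f1 true x2) := by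

  have key1 : (∑ x1, ∑ r1, p x1 x2 r1 true) = ∑ x1, q x1 x2 * f2 true x1 := by
    refine Finset.sum_congr rfl fun x1 _ => ?_
    simp [hp, Fintype.sum_bool]
    linear_combination q x1 x2 * f2 true x1 * hf1sum x2
  have key1n : (∑ x1, p x1 x2 true true) = f1 true x2 * ∑ x1, q x1 x2 * f2 true x1 := by
    rw [Finset.mul_sum]
    refine Finset.sum_congr rfl fun x1 _ => ?_
    rw [hp]; ring
  have key2 : (∑ x1, ∑ r1, ∑ r2, p x1 x2 r1 r2) = ∑ x1, q x1 x2 := by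
    refine Finset.sum_congr rfl fun x1 _ => ?_
    simp [hp, Fintype.sum_bool]
    linear_combination q x1 x2 * (f2 true x1 + f2 false x1) * hf1sum x2 + q x1 x2 * hf2sum x1
  have key2n : (∑ x1, ∑ r2, p x1 x2 true r2) = f1 true x2 * ∑ x1, q x1 x2 := by
    rw [Finset.mul_sum]
    refine Finset.sum_congr rfl fun x1 _ => ?_
    simp [hp, Fintype.sum_bool]
    linear_combination q x1 x2 * f1 true x2 * hf2sum x1
  constructor
  · intro h
    rw [key1n, key1] at *
    field_simp
  · intro h
    rw [key2n, key2] at *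
    field_simp
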